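/- For a connected orthogonal convex shape S, the function x ↦ y_min(x) over nonempty columns is anti-unimodal: there do not exist columns x1 < x2 < x3, all nonempty, with y_min(x1) < y_min(x2) and y_min(x3) < y_min(x2). -/
import Mathlib


def Adjacent (p q : ℤ × ℤ) : Prop :=
  (p.1 = q.1 ∧ (p.2 = q.2 + 1 ∨ q.2 = p.2 + 1)) ∨
  (p.2 = q.2 ∧ (p.1 = q.1 + 1 ∨ q.1 = p.1 + 1))

def ShapeConnected (S : Finset (ℤ × ℤ)) : Prop :=
  ∀ p ∈ S, ∀ q ∈ S,
    Relation.ReflTransGen (fun a b => a ∈ S ∧ b ∈ S ∧ Adjacent a b) p q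

def OrthoConvex (S : Finset (ℤ × ℤ)) : Prop :=
  (∀ p ∈ S, ∀ q ∈ S, p.1 = q.1 → ∀ y : ℤ,
      min p.2 q.2 < y → y < max p.2 q.2 → (p.1, y) ∈ S) ∧
  (∀ p ∈ S, ∀ q ∈ S, p.2 = q.2 → ∀ x : ℤ,
      min p.1 q.1 < x → x < max p.1 q.1 → (x, p.2) ∈ S)


/-- The set of y-coordinates of the column of `S` at abscissa `x`. -/
def col (S : Finset (ℤ × ℤ)) (x : ℤ) : Finset ℤ :=
  (S.filter (fun p => p.1 = x)).image Prod.snd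

lemma mem_col_iff (S : Finset (ℤ × ℤ)) (x y : ℤ) :
    y ∈ col S x ↔ (x, y) ∈ S := by
  simp only [col, Finset.mem_image, Finset.mem_filter]
  constructor
  · rintro ⟨⟨a, b⟩, ⟨hS, hx⟩, hy⟩
    simp at hx hy
    subst hx; subst hy; exact hS
  · intro h; exact ⟨(x, y), ⟨h, rfl⟩, rfl⟩

/-- If a path in `S` starts left of column `x₂` at height `< m₂`, ends at abscissa
`≥ x₂`, and every point of `S` in column `x₂` has height `≥ m₂`, then `S` contains
a point strictly left of `x₂` at height `m₂ - 1`. -/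
lemma cross_left (S : Finset (ℤ × ℤ)) (x₂ m₂ : ℤ)
    (Hcol : ∀ y : ℤ, (x₂, y) ∈ S → m₂ ≤ y) (p q : ℤ × ℤ)
    (h : Relation.ReflTransGen (fun a b => a ∈ S ∧ b ∈ S ∧ Adjacent a b) p q) :
    p.1 < x₂ → p.2 < m₂ → x₂ ≤ q.1 → ∃ w ∈ S, w.1 < x₂ ∧ w.2 = m₂ - 1 := by
  induction h using Relation.ReflTransGen.head_induction_on with
  | refl => intro h1 h2 h3; omega
  | head hstep _ ih =>
    rename_i a b _
    intro ha1 ha2 hq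
    obtain ⟨haS, hbS, hadj⟩ := hstep
    rcases hadj with ⟨hx, hy⟩ | ⟨hy, hx⟩
    · -- vertical step
      by_cases hb2 : b.2 < m₂
      · exact ih (by omega) hb2 hq
      · -- a is at height m₂ - 1
        refine ⟨a, haS, ha1, by omega⟩
    · -- horizontal step
      have hbx : b.1 ≠ x₂ := by
        intro hbx
        have := Hcol b.2 (by rw [← hbx]; exact hbS)
        omega
      exact ih (by omega) (by omega) hq

/-- Mirror image of `cross_left`. -/
lemma cross_right (S : Finset (ℤ × ℤ)) (x₂ m₂ : ℤ)
    (Hcol : ∀ y : ℤ, (x₂, y) ∈ S → m₂ ≤ y) (p q : ℤ × ℤ)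
    (h : Relation.ReflTransGen (fun a b => a ∈ S ∧ b ∈ S ∧ Adjacent a b) p q) :
    x₂ < p.1 → p.2 < m₂ → q.1 ≤ x₂ → ∃ w ∈ S, x₂ < w.1 ∧ w.2 = m₂ - 1 := by
  induction h using Relation.ReflTransGen.head_induction_on with
  | refl => intro h1 h2 h3; omega
  | head hstep _ ih =>
    rename_i a b _
    intro ha1 ha2 hq
    obtain ⟨haS, hbS, hadj⟩ := hstep
    rcases hadj with ⟨hx, hy⟩ | ⟨hy, hx⟩
    · by_cases hb2 : b.2 < m₂
      · exact ih (by omega) hb2 hq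
      · refine ⟨a, haS, ha1, by omega⟩
    · have hbx : b.1 ≠ x₂ := by
        intro hbx
        have := Hcol b.2 (by rw [← hbx]; exact hbS)
        omega
      exact ih (by omega) (by omega) hq

/-- The column minima of a connected orthogonal convex shape are anti-unimodal. -/
theorem stmt3 (S : Finset (ℤ × ℤ)) (hc : ShapeConnected S) (ho : OrthoConvex S) :
    ¬ ∃ (x₁ x₂ x₃ : ℤ) (h₁ : (col S x₁).Nonempty) (h₂ : (col S x₂).Nonempty)
        (h₃ : (col S x₃).Nonempty),
      x₁ < x₂ ∧ x₂ < x₃ ∧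
      (col S x₁).min' h₁ < (col S x₂).min' h₂ ∧
      (col S x₃).min' h₃ < (col S x₂).min' h₂ := by
  rintro ⟨x₁, x₂, x₃, h₁, h₂, h₃, hx12, hx23, hm1, hm3⟩
  set m₁ := (col S x₁).min' h₁ with hm₁def
  set m₂ := (col S x₂).min' h₂ with hm₂def
  set m₃ := (col S x₃).min' h₃ with hm₃def
  have hp1 : (x₁, m₁) ∈ S := (mem_col_iff S x₁ m₁).mp ((col S x₁).min'_mem h₁)
  have hp3 : (x₃, m₃) ∈ S := (mem_col_iff S x₃ m₃).mp ((col S x₃).min'_mem h₃)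
  have Hcol : ∀ y : ℤ, (x₂, y) ∈ S → m₂ ≤ y := fun y hy =>
    (col S x₂).min'_le y ((mem_col_iff S x₂ y).mpr hy)
  obtain ⟨w₁, hw₁S, hw₁x, hw₁y⟩ :=
    cross_left S x₂ m₂ Hcol (x₁, m₁) (x₃, m₃) (hc _ hp1 _ hp3)
      (by simpa using hx12) (by simpa using hm1) (by simpa using le_of_lt hx23)
  obtain ⟨w₃, hw₃S, hw₃x, hw₃y⟩ :=
    cross_right S x₂ m₂ Hcol (x₃, m₃) (x₁, m₁) (hc _ hp3 _ hp1)
      (by simpa using hx23) (by simpa using hm3) (by simpa using le_of_lt hx12)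
  have hrow : (x₂, w₁.2) ∈ S := by
    refine ho.2 w₁ hw₁S w₃ hw₃S (by omega) x₂ ?_ ?_
    · exact lt_of_le_of_lt (min_le_left _ _) hw₁x
    · exact lt_of_lt_of_le hw₃x (le_max_right _ _)
  have := Hcol w₁.2 hrow
  omega
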